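/- (Bennett) Let 1 < p ≤ q < ∞ and let (û_n)_{n≥0}, (ŵ_n)_{n≥0} be nonnegative sequences with M := sup_{m≥0} (Σ_{n=m}^∞ ŵ_n^q)^{1/q} (Σ_{n=0}^m û_n^{p'})^{1/p'} < ∞. Then the least constant C in the inequality (Σ_{n=0}^∞ |ŵ_n Σ_{k=0}^n û_k f_k|^q)^{1/q} ≤ C (Σ_n |f_n|^p)^{1/p} for all f ∈ l_p satisfies C ≍ M with comparison constants depending only on p and q. -/

import Mathlib

open scoped ENNReal NNReal BigOperators
open MeasureTheory

/-- Pointwise concavity/AM-GM estimate in `ℝ≥0∞`. -/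
lemma hardy_key1 {β : ℝ} (hβ0 : 0 < β) (hβ1 : β < 1) {a b : ℝ≥0∞} (hab : a ≤ b) (hb : b ≠ ⊤) :
    ENNReal.ofReal (1 - β) * ((b - a) * b ^ (-β)) ≤ b ^ (1 - β) - a ^ (1 - β) := by
  rcases eq_or_ne b 0 with rfl | hb0
  · have : a = 0 := le_zero_iff.mp hab
    simp [this]
  · have ha : a ≠ ⊤ := (hab.trans_lt hb.lt_top).ne
    have hβ1' : (0:ℝ) ≤ 1 - β := by linarith
    have hba : b - a ≠ ⊤ := (tsub_le_self.trans_lt hb.lt_top).ne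
    have hbneg : b ^ (-β) ≠ ⊤ := by
      rw [ENNReal.rpow_neg]
      simp [ENNReal.inv_ne_top, hb0, hβ0.ne', ENNReal.rpow_eq_zero_iff, hb.lt_top.ne]
    have hfin1 : ENNReal.ofReal (1 - β) * ((b - a) * b ^ (-β)) ≠ ⊤ :=
      ENNReal.mul_ne_top ENNReal.ofReal_ne_top (ENNReal.mul_ne_top hba hbneg)
    have hfin2 : b ^ (1 - β) - a ^ (1 - β) ≠ ⊤ :=
      (tsub_le_self.trans_lt (ENNReal.rpow_lt_top_of_nonneg hβ1' hb)).ne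
    rw [← ENNReal.toReal_le_toReal hfin1 hfin2]
    have hle : a ^ (1 - β) ≤ b ^ (1 - β) := ENNReal.rpow_le_rpow hab hβ1'
    rw [ENNReal.toReal_mul, ENNReal.toReal_mul, ENNReal.toReal_ofReal hβ1',
      ENNReal.toReal_sub_of_le hab hb,
      ENNReal.toReal_sub_of_le hle (ENNReal.rpow_ne_top_of_nonneg hβ1' hb),
      ← ENNReal.toReal_rpow, ← ENNReal.toReal_rpow, ← ENNReal.toReal_rpow]
    set A := a.toReal with hA
    set B := b.toReal with hB
    have hA0 : 0 ≤ A := ENNReal.toReal_nonneg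
    have hB0 : 0 < B := ENNReal.toReal_pos hb0 hb
    have hAB : A ≤ B := ENNReal.toReal_mono hb hab
    have hgm : A ^ (1 - β) * B ^ β ≤ (1 - β) * A + β * B :=
      Real.geom_mean_le_arith_mean2_weighted hβ1' hβ0.le hA0 hB0.le (by ring)
    have hBβ : (0:ℝ) < B ^ β := Real.rpow_pos_of_pos hB0 β
    have hsplit : B ^ (1 - β) * B ^ β = B := by
      rw [← Real.rpow_add hB0]; simp
    have hneg : B ^ (-β) = (B ^ β)⁻¹ := Real.rpow_neg hB0.le β
    rw [hneg, ← mul_assoc, mul_comm ((1-β) * (B - A))]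
    rw [inv_mul_le_iff₀ hBβ]
    nlinarith [hgm]

/-- Telescoping upper bound for monotone `g`. -/
lemma hardy_tel_up {g : ℕ → ℝ≥0∞} (hg : Monotone g) (N : ℕ) :
    ∑ k ∈ Finset.range N, (g (k+1) - g k) ≤ g N := by
  induction N with
  | zero => simp
  | succ N ih =>
      rw [Finset.sum_range_succ]
      calc ∑ k ∈ Finset.range N, (g (k+1) - g k) + (g (N+1) - g N) ≤ g N + (g (N+1) - g N) := by
            gcongr
        _ = g (N + 1) := by
            rw [add_comm, tsub_add_cancel_of_le (hg (Nat.le_succ N))]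

/-- Telescoping (tail) upper bound for antitone `f`. -/
lemma hardy_tel_down {f : ℕ → ℝ≥0∞} (hf : Antitone f) (m : ℕ) :
    ∑' n, (if m ≤ n then f n - f (n+1) else 0) ≤ f m := by
  rw [ENNReal.tsum_eq_iSup_nat]
  refine iSup_le fun N => ?_
  have key : ∀ N, (∑ n ∈ Finset.range N, if m ≤ n then f n - f (n+1) else 0) + f (max m N) ≤ f m := by
    intro N
    induction N with
    | zero => simp
    | succ N ih =>
        rw [Finset.sum_range_succ]
        by_cases h : m ≤ N
        · rw [if_pos h, max_eq_right (h.trans (Nat.le_succ N)), max_eq_right h] at *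
          rw [add_assoc, tsub_add_cancel_of_le (hf (Nat.le_succ N))]
          exact ih
        · rw [if_neg h, add_zero]
          rw [max_eq_left (by omega : N + 1 ≤ m)]
          rw [max_eq_left (by omega : N ≤ m)] at ih
          exact ih
  exact le_trans (le_add_right le_rfl) (key N)

/-- Hölder's inequality for `tsum` over `ℕ` in `ℝ≥0∞`. -/
lemma hardy_holder_tsum {p q : ℝ} (hpq : p.HolderConjugate q) (a b : ℕ → ℝ≥0∞) :
    ∑' k, a k * b k ≤ (∑' k, a k ^ p) ^ (1/p) * (∑' k, b k ^ q) ^ (1/q) := by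
  have := ENNReal.lintegral_mul_le_Lp_mul_Lq (Measure.count : Measure ℕ) hpq
    (f := a) (g := b) measurable_from_top.aemeasurable measurable_from_top.aemeasurable
  simpa [lintegral_count] using this

/-- Hölder's inequality for finite sums in `ℝ≥0∞`. -/
lemma hardy_holder_fin {p q : ℝ} (hpq : p.HolderConjugate q) (s : Finset ℕ) (a b : ℕ → ℝ≥0∞) :
    ∑ k ∈ s, a k * b k ≤ (∑ k ∈ s, a k ^ p) ^ (1/p) * (∑ k ∈ s, b k ^ q) ^ (1/q) := by
  set a' : ℕ → ℝ≥0∞ := fun k => if k ∈ s then a k else 0 with ha'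
  set b' : ℕ → ℝ≥0∞ := fun k => if k ∈ s then b k else 0 with hb'
  have e1 : ∑ k ∈ s, a k * b k = ∑' k, a' k * b' k := by
    rw [tsum_eq_sum (s := s) (fun k hk => by simp [a', b', hk])]
    exact Finset.sum_congr rfl fun k hk => by simp [a', b', hk]
  have e2 : ∑ k ∈ s, a k ^ p = ∑' k, a' k ^ p := by
    rw [tsum_eq_sum (s := s) (fun k hk => by simp [a', hk, ENNReal.zero_rpow_of_pos hpq.pos])]
    exact Finset.sum_congr rfl fun k hk => by simp [a', hk]
  have e3 : ∑ k ∈ s, b k ^ q = ∑' k, b' k ^ q := by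
    rw [tsum_eq_sum (s := s) (fun k hk => by simp [b', hk, ENNReal.zero_rpow_of_pos hpq.symm.pos])]
    exact Finset.sum_congr rfl fun k hk => by simp [b', hk]
  rw [e1, e2, e3]
  exact hardy_holder_tsum hpq a' b'

lemma hardy_iSup_rpow (f : ℕ → ℝ≥0∞) {r : ℝ} (hr : 0 < r) :
    (⨆ i, f i) ^ r = ⨆ i, f i ^ r := by
  apply le_antisymm
  · have h1 : ∀ i, f i ≤ (⨆ j, f j ^ r) ^ (1/r) := fun i => by
      have : f i = (f i ^ r) ^ (1/r) := by
        rw [← ENNReal.rpow_mul, mul_one_div, div_self hr.ne', ENNReal.rpow_one]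
      rw [this]
      exact ENNReal.rpow_le_rpow (le_iSup (fun j => f j ^ r) i) (by positivity)
    calc (⨆ i, f i) ^ r ≤ (((⨆ j, f j ^ r) ^ (1/r))) ^ r :=
          ENNReal.rpow_le_rpow (iSup_le h1) hr.le
      _ = ⨆ j, f j ^ r := by
          rw [← ENNReal.rpow_mul, one_div, inv_mul_cancel₀ hr.ne', ENNReal.rpow_one]
  · exact iSup_le fun i => ENNReal.rpow_le_rpow (le_iSup f i) hr.le

/-- Minkowski's inequality for double `tsum`s in `ℝ≥0∞`. -/
lemma hardy_minkowski {r : ℝ} (hr : 1 ≤ r) (A : ℕ → ℕ → ℝ≥0∞) :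
    (∑' n, (∑' t, A t n) ^ r) ^ (1/r) ≤ ∑' t, (∑' n, A t n ^ r) ^ (1/r) := by
  have hr0 : (0:ℝ) < r := lt_of_lt_of_le one_pos hr
  have bin : ∀ f g : ℕ → ℝ≥0∞,
      (∑' n, (f n + g n) ^ r) ^ (1/r) ≤ (∑' n, f n ^ r) ^ (1/r) + (∑' n, g n ^ r) ^ (1/r) := by
    intro f g
    have := ENNReal.lintegral_Lp_add_le (μ := (Measure.count : Measure ℕ))
      (f := f) (g := g) measurable_from_top.aemeasurable measurable_from_top.aemeasurable hr
    simpa [lintegral_count] using this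
  have fin : ∀ s : Finset ℕ, (∑' n, (∑ t ∈ s, A t n) ^ r) ^ (1/r)
      ≤ ∑ t ∈ s, (∑' n, A t n ^ r) ^ (1/r) := by
    intro s
    induction s using Finset.induction with
    | empty => simp [ENNReal.zero_rpow_of_pos hr0, hr0]
    | @insert x s hx ih =>
        have e : ∀ n, ∑ t ∈ insert x s, A t n = A x n + ∑ t ∈ s, A t n := fun n =>
          Finset.sum_insert hx
        calc (∑' n, (∑ t ∈ insert x s, A t n) ^ r) ^ (1/r)
            = (∑' n, (A x n + ∑ t ∈ s, A t n) ^ r) ^ (1/r) := by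
              congr 1; exact tsum_congr fun n => by rw [e n]
          _ ≤ (∑' n, A x n ^ r) ^ (1/r) + (∑' n, (∑ t ∈ s, A t n) ^ r) ^ (1/r) :=
              bin _ _
          _ ≤ (∑' n, A x n ^ r) ^ (1/r) + ∑ t ∈ s, (∑' n, A t n ^ r) ^ (1/r) := by gcongr
          _ = ∑ t ∈ insert x s, (∑' n, A t n ^ r) ^ (1/r) :=
              (Finset.sum_insert (f := fun t => (∑' n, A t n ^ r) ^ (1/r)) hx).symm
  set Z := ∑' t, (∑' n, A t n ^ r) ^ (1/r) with hZ
  have key : ∀ m : ℕ, ∑' n, (∑ t ∈ Finset.range m, A t n) ^ r ≤ Z ^ r := by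
    intro m
    have h1 : (∑' n, (∑ t ∈ Finset.range m, A t n) ^ r) ^ (1/r) ≤ Z :=
      (fin (Finset.range m)).trans (ENNReal.sum_le_tsum _)
    calc ∑' n, (∑ t ∈ Finset.range m, A t n) ^ r
        = ((∑' n, (∑ t ∈ Finset.range m, A t n) ^ r) ^ (1/r)) ^ r := by
          rw [← ENNReal.rpow_mul, one_div, inv_mul_cancel₀ hr0.ne', ENNReal.rpow_one]
      _ ≤ Z ^ r := ENNReal.rpow_le_rpow h1 hr0.le
  have swap : ∑' n, (∑' t, A t n) ^ r = ⨆ m, ∑' n, (∑ t ∈ Finset.range m, A t n) ^ r := by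
    have e1 : ∀ n, (∑' t, A t n) ^ r = ⨆ m, (∑ t ∈ Finset.range m, A t n) ^ r := fun n => by
      rw [ENNReal.tsum_eq_iSup_nat, hardy_iSup_rpow _ hr0]
    calc ∑' n, (∑' t, A t n) ^ r
        = ∫⁻ n, ⨆ m, (∑ t ∈ Finset.range m, A t n) ^ r ∂(Measure.count) := by
          rw [lintegral_count]; exact tsum_congr e1
      _ = ⨆ m, ∫⁻ n, (∑ t ∈ Finset.range m, A t n) ^ r ∂(Measure.count) := by
          refine lintegral_iSup (fun m => measurable_from_top) (fun m₁ m₂ h => fun n => ?_)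
          exact ENNReal.rpow_le_rpow (Finset.sum_le_sum_of_subset
            (Finset.range_subset_range.mpr h)) hr0.le
      _ = ⨆ m, ∑' n, (∑ t ∈ Finset.range m, A t n) ^ r := by
          simp [lintegral_count]
  calc (∑' n, (∑' t, A t n) ^ r) ^ (1/r)
      ≤ (Z ^ r) ^ (1/r) := by
        rw [swap]; exact ENNReal.rpow_le_rpow (iSup_le key) (by positivity)
    _ = Z := by rw [← ENNReal.rpow_mul, mul_one_div, div_self hr0.ne', ENNReal.rpow_one]

noncomputable def hV (u : ℕ → ℝ≥0) (pc : ℝ) : ℕ → ℝ≥0∞ :=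
  fun m => ∑ k ∈ Finset.range m, (u k : ℝ≥0∞) ^ pc

noncomputable def hW (w : ℕ → ℝ≥0) (q : ℝ) : ℕ → ℝ≥0∞ :=
  fun m => ∑' n, if m ≤ n then (w n : ℝ≥0∞) ^ q else 0

lemma hV_mono (u : ℕ → ℝ≥0) (pc : ℝ) : Monotone (hV u pc) := fun a b h =>
  Finset.sum_le_sum_of_subset (Finset.range_subset_range.mpr h)

lemma hW_anti (w : ℕ → ℝ≥0) (q : ℝ) : Antitone (hW w q) := fun a b h =>
  ENNReal.tsum_le_tsum fun n => by
    by_cases hn : b ≤ n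
    · simp [hn, le_trans h hn]
    · simp [hn]

lemma hW_rec (w : ℕ → ℝ≥0) (q : ℝ) (m : ℕ) :
    hW w q m = (w m : ℝ≥0∞) ^ q + hW w q (m + 1) := by
  have e : ∀ n, (if m ≤ n then (w n : ℝ≥0∞) ^ q else 0)
      = (if n = m then (w m : ℝ≥0∞) ^ q else 0) + (if m + 1 ≤ n then (w n : ℝ≥0∞) ^ q else 0) := by
    intro n
    rcases lt_trichotomy n m with h | rfl | h
    · simp [Nat.not_le.mpr h, h.ne, (show ¬ (m + 1 ≤ n) by omega)]
    · simp [(show ¬ (n + 1 ≤ n) by omega)]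
    · have h1 : m ≤ n := h.le
      have h2 : m + 1 ≤ n := h
      simp [h1, h2, h.ne']
  unfold hW
  rw [tsum_congr e, ENNReal.tsum_add, tsum_ite_eq m (fun _ => (w m : ℝ≥0∞) ^ q)]

lemma hW_le (w : ℕ → ℝ≥0) (q : ℝ) {m n : ℕ} (h : m ≤ n) :
    (w n : ℝ≥0∞) ^ q ≤ hW w q m := by
  have := ENNReal.le_tsum (f := fun k => if m ≤ k then (w k : ℝ≥0∞) ^ q else 0) n
  simpa [h, hW] using this

lemma hV_single_le (u : ℕ → ℝ≥0) (pc : ℝ) (k : ℕ) :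
    (u k : ℝ≥0∞) ^ pc ≤ hV u pc (k + 1) :=
  Finset.single_le_sum (f := fun j => (u j : ℝ≥0∞) ^ pc) (fun _ _ => zero_le)
    (Finset.self_mem_range_succ k)
lemma hardy_conj {p : ℝ} (hp : 1 < p) : p.HolderConjugate (p / (p - 1)) := by
  refine ⟨?_, by linarith, div_pos (by linarith) (by linarith)⟩
  have h0 : p ≠ 0 := by linarith
  have h1 : p - 1 ≠ 0 := by intro h; rw [sub_eq_zero] at h; simp [h.symm] at hp
  field_simp <;> ring

lemma hardy_pc_pos {p pc : ℝ} (hp : 1 < p) (hpc : pc = p / (p - 1)) : 1 < pc := by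
  subst hpc
  rw [lt_div_iff₀ (by linarith)]
  linarith

lemma hardy_one_sub {p pc : ℝ} (hp : 1 < p) (hpc : pc = p / (p - 1)) :
    (1 : ℝ) - 1 / p = 1 / pc := by
  subst hpc
  rw [one_div_div]
  field_simp

lemma hardy_step1 {p pc : ℝ} (hp : 1 < p) (hpc : pc = p / (p - 1)) (u : ℕ → ℝ≥0)
    (g : ℕ → ℝ≥0∞) (n : ℕ) (hfin : ∀ k, k ≤ n → hV u pc (k + 1) ≠ ⊤) :
    ∑ k ∈ Finset.range (n + 1), (u k : ℝ≥0∞) * g k ≤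
      (∑ k ∈ Finset.range (n + 1), g k ^ p * hV u pc (k + 1) ^ (1 / pc)) ^ (1 / p) *
      (ENNReal.ofReal pc * hV u pc (n + 1) ^ (1 / pc)) ^ (1 / pc) := by
  have hp0 : (0:ℝ) < p := by linarith
  have hpc1 : 1 < pc := hardy_pc_pos hp hpc
  have hpc0 : (0:ℝ) < pc := by linarith
  have conj : p.HolderConjugate pc := hpc ▸ hardy_conj hp
  have hp1 : p - 1 ≠ 0 := by intro h; rw [sub_eq_zero] at h; simp [h.symm] at hp
  set α : ℝ := 1 / (p * pc) with hα
  set V : ℕ → ℝ≥0∞ := hV u pc with hVdef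
  -- pointwise Hölder split
  have hsplit : ∀ k ∈ Finset.range (n + 1),
      (u k : ℝ≥0∞) * g k ≤ (g k * V (k+1) ^ α) * ((u k : ℝ≥0∞) * V (k+1) ^ (-α)) := by
    intro k hk
    rcases eq_or_ne (V (k+1)) 0 with hV0 | hV0
    · have hu : (u k : ℝ≥0∞) = 0 := by
        have h1 := hV_single_le u pc k
        rw [← hVdef, hV0, le_zero_iff, ENNReal.rpow_eq_zero_iff] at h1
        rcases h1 with ⟨h1, _⟩ | ⟨h1, _⟩
        · exact h1
        · exact absurd h1 (ENNReal.coe_ne_top)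
      simp [hu]
    · have hVt := hfin k (Finset.mem_range_succ_iff.mp hk)
      have h1 : V (k+1) ^ α * V (k+1) ^ (-α) = 1 := by
        rw [← ENNReal.rpow_add α (-α) hV0 hVt, add_neg_cancel, ENNReal.rpow_zero]
      have heq : (u k : ℝ≥0∞) * g k
          = (g k * V (k+1) ^ α) * ((u k : ℝ≥0∞) * V (k+1) ^ (-α)) := by
        calc (u k : ℝ≥0∞) * g k
            = ((u k : ℝ≥0∞) * g k) * (V (k+1) ^ α * V (k+1) ^ (-α)) := by rw [h1, mul_one]
          _ = (g k * V (k+1) ^ α) * ((u k : ℝ≥0∞) * V (k+1) ^ (-α)) := by ring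
      exact heq.le
  -- first factor computation
  have hsum1 : ∑ k ∈ Finset.range (n + 1), (g k * V (k+1) ^ α) ^ p
      = ∑ k ∈ Finset.range (n + 1), g k ^ p * V (k+1) ^ (1 / pc) := by
    have hαp : α * p = 1 / pc := by rw [hα]; field_simp; try ring
    refine Finset.sum_congr rfl fun k _ => ?_
    rw [ENNReal.mul_rpow_of_nonneg _ _ hp0.le, ← ENNReal.rpow_mul, hαp]
  -- second factor bound
  have hsum2 : ∑ k ∈ Finset.range (n + 1), ((u k : ℝ≥0∞) * V (k+1) ^ (-α)) ^ pc
      ≤ ENNReal.ofReal pc * V (n+1) ^ (1 / pc) := by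
    have e : ∀ k, ((u k : ℝ≥0∞) * V (k+1) ^ (-α)) ^ pc
        = (u k : ℝ≥0∞) ^ pc * V (k+1) ^ (-(1/p)) := by
      have hαpc : (-α) * pc = -(1/p) := by rw [hα]; field_simp; try ring
      intro k
      rw [ENNReal.mul_rpow_of_nonneg _ _ hpc0.le, ← ENNReal.rpow_mul, hαpc]
    have key : ∀ k, k ≤ n → ENNReal.ofReal (1 / pc) * ((u k : ℝ≥0∞) ^ pc * V (k+1) ^ (-(1/p)))
        ≤ V (k+1) ^ (1 / pc) - V k ^ (1 / pc) := by
      intro k hk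
      have hVk : V k ≤ V (k+1) := hV_mono u pc (Nat.le_succ k)
      have hVt : V (k+1) ≠ ⊤ := hfin k hk
      have hVrec : V (k+1) - V k = (u k : ℝ≥0∞) ^ pc := by
        have hVkt : V k ≠ ⊤ := (hVk.trans_lt hVt.lt_top).ne
        rw [hVdef]
        show hV u pc (k+1) - hV u pc k = _
        unfold hV
        rw [Finset.sum_range_succ]
        exact ENNReal.add_sub_cancel_left hVkt
      have hkey := hardy_key1 (β := 1/p) (by positivity)
        ((div_lt_one hp0).mpr hp) hVk hVt
      rw [hVrec, hardy_one_sub hp hpc] at hkey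
      exact hkey
    have hc0 : (ENNReal.ofReal (1 / pc)) ≠ 0 := (ENNReal.ofReal_pos.mpr (by positivity)).ne'
    have hmul : ENNReal.ofReal (1 / pc) *
        (∑ k ∈ Finset.range (n + 1), (u k : ℝ≥0∞) ^ pc * V (k+1) ^ (-(1/p)))
        ≤ V (n+1) ^ (1 / pc) := by
      rw [Finset.mul_sum]
      calc ∑ k ∈ Finset.range (n+1),
            ENNReal.ofReal (1/pc) * ((u k : ℝ≥0∞) ^ pc * V (k+1) ^ (-(1/p)))
          ≤ ∑ k ∈ Finset.range (n+1), (V (k+1) ^ (1/pc) - V k ^ (1/pc)) :=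
            Finset.sum_le_sum fun k hk => key k (Finset.mem_range_succ_iff.mp hk)
        _ ≤ V (n+1) ^ (1/pc) :=
            hardy_tel_up (fun a b h => ENNReal.rpow_le_rpow (hV_mono u pc h) (by positivity)) (n+1)
    calc ∑ k ∈ Finset.range (n + 1), ((u k : ℝ≥0∞) * V (k+1) ^ (-α)) ^ pc
        = ∑ k ∈ Finset.range (n + 1), (u k : ℝ≥0∞) ^ pc * V (k+1) ^ (-(1/p)) :=
          Finset.sum_congr rfl fun k _ => e k
      _ = (ENNReal.ofReal (1/pc))⁻¹ * (ENNReal.ofReal (1/pc) *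
            ∑ k ∈ Finset.range (n + 1), (u k : ℝ≥0∞) ^ pc * V (k+1) ^ (-(1/p))) := by
          rw [← mul_assoc, ENNReal.inv_mul_cancel hc0 ENNReal.ofReal_ne_top, one_mul]
      _ ≤ (ENNReal.ofReal (1/pc))⁻¹ * V (n+1) ^ (1/pc) := by gcongr
      _ = ENNReal.ofReal pc * V (n+1) ^ (1/pc) := by
          rw [one_div, ENNReal.ofReal_inv_of_pos hpc0, inv_inv]
  calc ∑ k ∈ Finset.range (n + 1), (u k : ℝ≥0∞) * g k
      ≤ ∑ k ∈ Finset.range (n + 1), (g k * V (k+1) ^ α) * ((u k : ℝ≥0∞) * V (k+1) ^ (-α)) :=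
        Finset.sum_le_sum hsplit
    _ ≤ (∑ k ∈ Finset.range (n + 1), (g k * V (k+1) ^ α) ^ p) ^ (1/p) *
        (∑ k ∈ Finset.range (n + 1), ((u k : ℝ≥0∞) * V (k+1) ^ (-α)) ^ pc) ^ (1/pc) :=
        hardy_holder_fin conj _ _ _
    _ ≤ (∑ k ∈ Finset.range (n + 1), g k ^ p * V (k+1) ^ (1 / pc)) ^ (1 / p) *
        (ENNReal.ofReal pc * V (n+1) ^ (1 / pc)) ^ (1 / pc) := by
        rw [hsum1]
        exact mul_le_mul_right (ENNReal.rpow_le_rpow hsum2 (by positivity)) _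
lemma hardy_rpow_ne_zero {x : ℝ≥0∞} {y : ℝ} (hx : x ≠ 0) (hy : 0 < y) : x ^ y ≠ 0 := by
  intro h
  rcases ENNReal.rpow_eq_zero_iff.mp h with ⟨h0, _⟩ | ⟨_, hlt⟩
  · exact hx h0
  · linarith

lemma hardy_rpow_eq_zero {x : ℝ≥0∞} {y : ℝ} (hx : x ≠ ⊤) (hy : 0 < y) (h : x ^ y = 0) : x = 0 := by
  rcases ENNReal.rpow_eq_zero_iff.mp h with ⟨h0, _⟩ | ⟨ht, _⟩
  · exact h0
  · exact absurd ht hx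

lemma hardy_one_sub2 {p pc : ℝ} (hp : 1 < p) (hpc : pc = p / (p - 1)) :
    (1 : ℝ) - 1 / pc = 1 / p := by
  subst hpc
  rw [one_div_div]
  field_simp
  ring

lemma hardy_Wpos {q : ℝ} (hq0 : 0 < q) (w : ℕ → ℝ≥0) {n k : ℕ} (hk : k ≤ n) (hw : w n ≠ 0) :
    hW w q k ≠ 0 := by
  intro h0
  have h1 := hW_le w q hk
  rw [h0, le_zero_iff] at h1
  have h2 := hardy_rpow_eq_zero ENNReal.coe_ne_top hq0 h1
  exact hw (by exact_mod_cast h2)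

lemma hardy_Vfin {p q pc : ℝ} (hp : 1 < p) (hq0 : 0 < q) (hpc : pc = p / (p - 1))
    (u w : ℕ → ℝ≥0) {M : ℝ≥0∞} (hMt : M ≠ ⊤)
    (hM : ∀ m, hW w q m ^ (1/q) * hV u pc (m+1) ^ (1/pc) ≤ M)
    {n : ℕ} (hw : w n ≠ 0) : ∀ k, k ≤ n → hV u pc (k + 1) ≠ ⊤ := by
  have hpc0 : (0:ℝ) < pc := lt_trans one_pos (hardy_pc_pos hp hpc)
  intro k hk ht
  have hWk : hW w q k ≠ 0 := hardy_Wpos hq0 w hk hw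
  have hMk := hM k
  rw [ht, ENNReal.top_rpow_of_pos (by positivity), ENNReal.mul_top
    (hardy_rpow_ne_zero hWk (by positivity))] at hMk
  exact hMt (top_le_iff.mp hMk)

lemma hardy_step2 {p q pc : ℝ} (hp : 1 < p) (hq0 : 0 < q) (hpc : pc = p / (p - 1))
    (u w : ℕ → ℝ≥0) {M : ℝ≥0∞} (hMt : M ≠ ⊤)
    (hM : ∀ m, hW w q m ^ (1/q) * hV u pc (m+1) ^ (1/pc) ≤ M) (n : ℕ) :
    (w n : ℝ≥0∞) ^ q * hV u pc (n+1) ^ (q/(pc*pc)) ≤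
      M ^ (q/pc) * ((w n : ℝ≥0∞) ^ q * hW w q n ^ (-(1/pc))) := by
  have hpc1 : 1 < pc := hardy_pc_pos hp hpc
  have hpc0 : (0:ℝ) < pc := lt_trans one_pos hpc1
  by_cases hw : w n = 0
  · rw [hw, ENNReal.coe_zero, ENNReal.zero_rpow_of_pos hq0, zero_mul, zero_mul, mul_zero]
  have hVt : hV u pc (n+1) ≠ ⊤ := hardy_Vfin hp hq0 hpc u w hMt hM hw n le_rfl
  have hWn0 : hW w q n ≠ 0 := hardy_Wpos hq0 w le_rfl hw
  rcases eq_or_ne (hW w q n) ⊤ with hWt | hWt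
  · have hMn := hM n
    rw [hWt, ENNReal.top_rpow_of_pos (by positivity)] at hMn
    have hV0 : hV u pc (n+1) ^ (1/pc) = 0 := by
      by_contra h
      rw [ENNReal.top_mul h] at hMn
      exact hMt (top_le_iff.mp hMn)
    have hVz : hV u pc (n+1) = 0 := hardy_rpow_eq_zero hVt (by positivity) hV0
    rw [hVz, ENNReal.zero_rpow_of_pos (by positivity), mul_zero]
    exact zero_le
  · have hMn := hM n
    have hcan : hW w q n ^ (-(1/q)) * hW w q n ^ (1/q) = 1 := by
      rw [← ENNReal.rpow_add _ _ hWn0 hWt, neg_add_cancel, ENNReal.rpow_zero]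
    have hVle : hV u pc (n+1) ^ (1/pc) ≤ M * hW w q n ^ (-(1/q)) := by
      calc hV u pc (n+1) ^ (1/pc)
          = (hW w q n ^ (-(1/q)) * hW w q n ^ (1/q)) * hV u pc (n+1) ^ (1/pc) := by
            rw [hcan, one_mul]
        _ = hW w q n ^ (-(1/q)) * (hW w q n ^ (1/q) * hV u pc (n+1) ^ (1/pc)) := by ring
        _ ≤ hW w q n ^ (-(1/q)) * M := mul_le_mul_right hMn _
        _ = M * hW w q n ^ (-(1/q)) := mul_comm _ _
    have h2 : hV u pc (n+1) ^ (q/(pc*pc)) ≤ M ^ (q/pc) * hW w q n ^ (-(1/pc)) := by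
      calc hV u pc (n+1) ^ (q/(pc*pc))
          = (hV u pc (n+1) ^ (1/pc)) ^ (q/pc) := by
            rw [← ENNReal.rpow_mul, show (1/pc) * (q/pc) = q/(pc*pc) by ring]
        _ ≤ (M * hW w q n ^ (-(1/q))) ^ (q/pc) := ENNReal.rpow_le_rpow hVle (by positivity)
        _ = M ^ (q/pc) * (hW w q n ^ (-(1/q))) ^ (q/pc) :=
            ENNReal.mul_rpow_of_nonneg _ _ (by positivity)
        _ = M ^ (q/pc) * hW w q n ^ (-(1/pc)) := by
            rw [← ENNReal.rpow_mul, show (-(1/q)) * (q/pc) = -(1/pc) by field_simp]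
    calc (w n : ℝ≥0∞) ^ q * hV u pc (n+1) ^ (q/(pc*pc))
        ≤ (w n : ℝ≥0∞) ^ q * (M ^ (q/pc) * hW w q n ^ (-(1/pc))) := mul_le_mul_right h2 _
      _ = M ^ (q/pc) * ((w n : ℝ≥0∞) ^ q * hW w q n ^ (-(1/pc))) := by ring
lemma hardy_step3 {p q pc : ℝ} (hp : 1 < p) (hpq : p ≤ q) (hpc : pc = p / (p - 1))
    (u w : ℕ → ℝ≥0) {M : ℝ≥0∞}
    (hM : ∀ m, hW w q m ^ (1/q) * hV u pc (m+1) ^ (1/pc) ≤ M) (g : ℕ → ℝ≥0∞) :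
    (∑' n, (∑ k ∈ Finset.range (n+1), g k ^ p * hV u pc (k+1) ^ (1/pc)) ^ (q/p) *
        ((w n : ℝ≥0∞) ^ q * hW w q n ^ (-(1/pc)))) ^ (p/q)
      ≤ (ENNReal.ofReal p) ^ (p/q) * (M * ∑' k, g k ^ p) := by
  have hp0 : (0:ℝ) < p := by linarith
  have hq0 : (0:ℝ) < q := by linarith
  have hpc1 : 1 < pc := hardy_pc_pos hp hpc
  have hpc0 : (0:ℝ) < pc := lt_trans one_pos hpc1
  have hβ0 : (0:ℝ) < 1/pc := by positivity
  have hβ1 : (1:ℝ)/pc < 1 := by rw [div_lt_one hpc0]; exact hpc1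
  set r : ℝ := q / p with hr
  have hr1 : 1 ≤ r := (one_le_div hp0).mpr hpq
  have hr0 : (0:ℝ) < r := by linarith
  have h1r : p / q = 1 / r := by rw [hr, one_div_div]
  set G : ℕ → ℝ≥0∞ := fun t => g t ^ p * hV u pc (t+1) ^ (1/pc) with hG
  set ν : ℕ → ℝ≥0∞ := fun n => (w n : ℝ≥0∞) ^ q * hW w q n ^ (-(1/pc)) with hν
  set A : ℕ → ℕ → ℝ≥0∞ := fun t n => (if t ≤ n then G t else 0) * ν n ^ (1/r) with hA
  have hrinv : ∀ x : ℝ≥0∞, (x ^ (1/r)) ^ r = x := fun x => by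
    rw [← ENNReal.rpow_mul, one_div, inv_mul_cancel₀ hr0.ne', ENNReal.rpow_one]
  have hrinv' : ∀ x : ℝ≥0∞, (x ^ r) ^ (1/r) = x := fun x => by
    rw [← ENNReal.rpow_mul, mul_one_div, div_self hr0.ne', ENNReal.rpow_one]
  have e1 : ∀ n, (∑' t, A t n) ^ r
      = (∑ k ∈ Finset.range (n+1), G k) ^ r * ν n := by
    intro n
    have hs : ∑' t, A t n = (∑ k ∈ Finset.range (n+1), G k) * ν n ^ (1/r) := by
      rw [hA]
      rw [ENNReal.tsum_mul_right]
      congr 1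
      rw [tsum_eq_sum (s := Finset.range (n+1))
        (fun t ht => if_neg (fun h => ht (Finset.mem_range_succ_iff.mpr h)))]
      exact Finset.sum_congr rfl fun t ht => if_pos (Finset.mem_range_succ_iff.mp ht)
    rw [hs, ENNReal.mul_rpow_of_nonneg _ _ hr0.le, hrinv]
  have e2 : ∀ t, (∑' n, A t n ^ r) ^ (1/r)
      = G t * (∑' n, if t ≤ n then ν n else 0) ^ (1/r) := by
    intro t
    have ha : ∀ n, A t n ^ r = G t ^ r * (if t ≤ n then ν n else 0) := by
      intro n
      rw [hA]
      simp only []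
      rw [ENNReal.mul_rpow_of_nonneg _ _ hr0.le, hrinv]
      by_cases h : t ≤ n
      · rw [if_pos h, if_pos h]
      · rw [if_neg h, if_neg h, ENNReal.zero_rpow_of_pos hr0, zero_mul, mul_zero]
    rw [tsum_congr ha, ENNReal.tsum_mul_left,
      ENNReal.mul_rpow_of_nonneg _ _ (by positivity), hrinv']
  have e3 : ∀ t, (∑' n, if t ≤ n then ν n else 0) ≤ ENNReal.ofReal p * hW w q t ^ (1/p) := by
    intro t
    have hpt : ∀ n, ENNReal.ofReal (1/p) * ν n
        ≤ hW w q n ^ (1/p) - hW w q (n+1) ^ (1/p) := by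
      intro n
      rcases eq_or_ne (hW w q n) ⊤ with hWt | hWt
      · have : ν n = 0 := by
          rw [hν]
          simp only []
          rw [hWt, ENNReal.top_rpow_of_neg (by simpa using hβ0), mul_zero]
        rw [this, mul_zero]
        exact zero_le
      · have hWn1t : hW w q (n+1) ≠ ⊤ :=
          ((hW_anti w q (Nat.le_succ n)).trans_lt hWt.lt_top).ne
        have hWrec : hW w q n - hW w q (n+1) = (w n : ℝ≥0∞) ^ q := by
          rw [hW_rec w q n]
          exact ENNReal.add_sub_cancel_right hWn1t
        have hk := hardy_key1 (β := 1/pc) hβ0 hβ1 (hW_anti w q (Nat.le_succ n)) hWt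
        rw [hWrec, hardy_one_sub2 hp hpc] at hk
        exact hk
    have hsum : ENNReal.ofReal (1/p) * (∑' n, if t ≤ n then ν n else 0)
        ≤ hW w q t ^ (1/p) := by
      rw [← ENNReal.tsum_mul_left]
      calc ∑' n, ENNReal.ofReal (1/p) * (if t ≤ n then ν n else 0)
          ≤ ∑' n, (if t ≤ n then hW w q n ^ (1/p) - hW w q (n+1) ^ (1/p) else 0) := by
            refine ENNReal.tsum_le_tsum fun n => ?_
            by_cases h : t ≤ n
            · rw [if_pos h, if_pos h]; exact hpt n
            · rw [if_neg h, if_neg h, mul_zero]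
        _ ≤ hW w q t ^ (1/p) :=
            hardy_tel_down (fun a b h => ENNReal.rpow_le_rpow (hW_anti w q h) (by positivity)) t
    have hc0 : (ENNReal.ofReal (1/p)) ≠ 0 := (ENNReal.ofReal_pos.mpr (by positivity)).ne'
    calc ∑' n, (if t ≤ n then ν n else 0)
        = (ENNReal.ofReal (1/p))⁻¹ *
          (ENNReal.ofReal (1/p) * ∑' n, (if t ≤ n then ν n else 0)) := by
          rw [← mul_assoc, ENNReal.inv_mul_cancel hc0 ENNReal.ofReal_ne_top, one_mul]
      _ ≤ (ENNReal.ofReal (1/p))⁻¹ * hW w q t ^ (1/p) := mul_le_mul_right hsum _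
      _ = ENNReal.ofReal p * hW w q t ^ (1/p) := by
          rw [one_div, ENNReal.ofReal_inv_of_pos hp0, inv_inv]
  calc (∑' n, (∑ k ∈ Finset.range (n+1), G k) ^ r * ν n) ^ (p/q)
      = (∑' n, (∑' t, A t n) ^ r) ^ (1/r) := by
        rw [h1r]; congr 1; exact (tsum_congr e1).symm
    _ ≤ ∑' t, (∑' n, A t n ^ r) ^ (1/r) := hardy_minkowski hr1 A
    _ = ∑' t, G t * (∑' n, if t ≤ n then ν n else 0) ^ (1/r) := tsum_congr e2
    _ ≤ ∑' t, G t * (ENNReal.ofReal p * hW w q t ^ (1/p)) ^ (1/r) :=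
        ENNReal.tsum_le_tsum fun t =>
          mul_le_mul_right (ENNReal.rpow_le_rpow (e3 t) (by positivity)) _
    _ = ∑' t, (ENNReal.ofReal p) ^ (1/r) * (G t * hW w q t ^ (1/q)) := by
        refine tsum_congr fun t => ?_
        rw [ENNReal.mul_rpow_of_nonneg _ _ (by positivity), ← ENNReal.rpow_mul,
          show (1/p) * (1/r) = 1/q by rw [hr]; field_simp]
        ring
    _ = (ENNReal.ofReal p) ^ (1/r) * ∑' t, G t * hW w q t ^ (1/q) := ENNReal.tsum_mul_left
    _ ≤ (ENNReal.ofReal p) ^ (1/r) * ∑' t, g t ^ p * M := by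
        refine mul_le_mul_right (ENNReal.tsum_le_tsum fun t => ?_) _
        calc G t * hW w q t ^ (1/q)
            = g t ^ p * (hW w q t ^ (1/q) * hV u pc (t+1) ^ (1/pc)) := by
              rw [hG]; ring
          _ ≤ g t ^ p * M := mul_le_mul_right (hM t) _
    _ = (ENNReal.ofReal p) ^ (1/r) * (M * ∑' t, g t ^ p) := by
        rw [ENNReal.tsum_mul_right, mul_comm (∑' t, g t ^ p) M]
    _ = (ENNReal.ofReal p) ^ (p/q) * (M * ∑' k, g k ^ p) := by rw [h1r]
lemma hardy_core {p q pc : ℝ} (hp : 1 < p) (hpq : p ≤ q) (hpc : pc = p / (p - 1))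
    (u w : ℕ → ℝ≥0) {M : ℝ≥0∞} (hM0 : M ≠ 0) (hMt : M ≠ ⊤)
    (hM : ∀ m, hW w q m ^ (1/q) * hV u pc (m+1) ^ (1/pc) ≤ M) (g : ℕ → ℝ≥0∞) :
    (∑' n, ((w n : ℝ≥0∞) * ∑ k ∈ Finset.range (n+1), (u k : ℝ≥0∞) * g k) ^ q) ^ (1/q)
      ≤ (ENNReal.ofReal pc) ^ (1/pc) * (ENNReal.ofReal p) ^ (1/q) * M *
        (∑' k, g k ^ p) ^ (1/p) := by
  have hp0 : (0:ℝ) < p := by linarith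
  have hq0 : (0:ℝ) < q := by linarith
  have hpc1 : 1 < pc := hardy_pc_pos hp hpc
  have hpc0 : (0:ℝ) < pc := lt_trans one_pos hpc1
  have hconj : 1/p + 1/pc = 1 := by
    rw [hpc, one_div_div]
    field_simp
    ring
  set X : ℝ≥0∞ := ∑' k, g k ^ p with hX
  set T : ℕ → ℝ≥0∞ := fun n => ∑ k ∈ Finset.range (n+1), g k ^ p * hV u pc (k+1) ^ (1/pc)
    with hT
  set ν : ℕ → ℝ≥0∞ := fun n => (w n : ℝ≥0∞) ^ q * hW w q n ^ (-(1/pc)) with hν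
  -- pointwise bound
  have step1' : ∀ n, ((w n : ℝ≥0∞) * ∑ k ∈ Finset.range (n+1), (u k : ℝ≥0∞) * g k) ^ q
      ≤ (ENNReal.ofReal pc) ^ (q/pc) * (M ^ (q/pc) * (T n ^ (q/p) * ν n)) := by
    intro n
    by_cases hw : w n = 0
    · rw [hw, ENNReal.coe_zero, zero_mul, ENNReal.zero_rpow_of_pos hq0]
      exact zero_le
    have hfin : ∀ k, k ≤ n → hV u pc (k+1) ≠ ⊤ := hardy_Vfin hp hq0 hpc u w hMt hM hw
    have hs1 := hardy_step1 hp hpc u g n hfin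
    have main1 : ((w n : ℝ≥0∞) * ∑ k ∈ Finset.range (n+1), (u k : ℝ≥0∞) * g k) ^ q
        ≤ (ENNReal.ofReal pc) ^ (q/pc) *
          (T n ^ (q/p) * ((w n : ℝ≥0∞) ^ q * hV u pc (n+1) ^ (q/(pc*pc)))) := by
      calc ((w n : ℝ≥0∞) * ∑ k ∈ Finset.range (n+1), (u k : ℝ≥0∞) * g k) ^ q
          ≤ ((w n : ℝ≥0∞) * (T n ^ (1/p) *
              (ENNReal.ofReal pc * hV u pc (n+1) ^ (1/pc)) ^ (1/pc))) ^ q :=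
            ENNReal.rpow_le_rpow (mul_le_mul_right hs1 _) hq0.le
        _ = (ENNReal.ofReal pc) ^ (q/pc) *
            (T n ^ (q/p) * ((w n : ℝ≥0∞) ^ q * hV u pc (n+1) ^ (q/(pc*pc)))) := by
            rw [ENNReal.mul_rpow_of_nonneg _ _ hq0.le,
              ENNReal.mul_rpow_of_nonneg _ _ hq0.le,
              ENNReal.mul_rpow_of_nonneg _ _ (by positivity : (0:ℝ) ≤ 1/pc),
              ENNReal.mul_rpow_of_nonneg _ _ hq0.le,
              ← ENNReal.rpow_mul, ← ENNReal.rpow_mul, ← ENNReal.rpow_mul,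
              ← ENNReal.rpow_mul,
              show (1/p) * q = q/p by ring,
              show (1/pc) * q = q/pc by ring,
              show (1/pc) * (q/pc) = q/(pc*pc) by ring]
            ring
    refine main1.trans ?_
    have := hardy_step2 hp hq0 hpc u w hMt hM n
    calc (ENNReal.ofReal pc) ^ (q/pc) *
          (T n ^ (q/p) * ((w n : ℝ≥0∞) ^ q * hV u pc (n+1) ^ (q/(pc*pc))))
        ≤ (ENNReal.ofReal pc) ^ (q/pc) * (T n ^ (q/p) * (M ^ (q/pc) * ν n)) := by
          refine mul_le_mul_right (mul_le_mul_right ?_ _) _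
          exact this
      _ = (ENNReal.ofReal pc) ^ (q/pc) * (M ^ (q/pc) * (T n ^ (q/p) * ν n)) := by ring
  -- sum the pointwise bound
  have total : (∑' n, ((w n : ℝ≥0∞) * ∑ k ∈ Finset.range (n+1), (u k : ℝ≥0∞) * g k) ^ q)
      ≤ (ENNReal.ofReal pc) ^ (q/pc) * (M ^ (q/pc) * ∑' n, T n ^ (q/p) * ν n) := by
    calc (∑' n, ((w n : ℝ≥0∞) * ∑ k ∈ Finset.range (n+1), (u k : ℝ≥0∞) * g k) ^ q)
        ≤ ∑' n, (ENNReal.ofReal pc) ^ (q/pc) * (M ^ (q/pc) * (T n ^ (q/p) * ν n)) :=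
          ENNReal.tsum_le_tsum step1'
      _ = (ENNReal.ofReal pc) ^ (q/pc) * (M ^ (q/pc) * ∑' n, T n ^ (q/p) * ν n) := by
          rw [ENNReal.tsum_mul_left, ENNReal.tsum_mul_left]
  -- use step3
  have hstep3 := hardy_step3 hp hpq hpc u w hM g
  have hsum3 : ∑' n, T n ^ (q/p) * ν n ≤ ENNReal.ofReal p * (M ^ (q/p) * X ^ (q/p)) := by
    have hqp0 : (0:ℝ) < q/p := by positivity
    have h1 : ∑' n, T n ^ (q/p) * ν n
        = ((∑' n, T n ^ (q/p) * ν n) ^ (p/q)) ^ (q/p) := by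
      rw [← ENNReal.rpow_mul, show (p/q) * (q/p) = 1 by field_simp, ENNReal.rpow_one]
    rw [h1]
    calc ((∑' n, T n ^ (q/p) * ν n) ^ (p/q)) ^ (q/p)
        ≤ ((ENNReal.ofReal p) ^ (p/q) * (M * X)) ^ (q/p) :=
          ENNReal.rpow_le_rpow hstep3 hqp0.le
      _ = ENNReal.ofReal p * (M ^ (q/p) * X ^ (q/p)) := by
          rw [ENNReal.mul_rpow_of_nonneg _ _ hqp0.le,
            ENNReal.mul_rpow_of_nonneg _ _ hqp0.le,
            ← ENNReal.rpow_mul, show (p/q) * (q/p) = 1 by field_simp, ENNReal.rpow_one]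
  -- combine everything
  have final : (∑' n, ((w n : ℝ≥0∞) * ∑ k ∈ Finset.range (n+1), (u k : ℝ≥0∞) * g k) ^ q)
      ≤ ((ENNReal.ofReal pc) ^ (q/pc) * ENNReal.ofReal p) * (M ^ q * X ^ (q/p)) := by
    refine total.trans ?_
    calc (ENNReal.ofReal pc) ^ (q/pc) * (M ^ (q/pc) * ∑' n, T n ^ (q/p) * ν n)
        ≤ (ENNReal.ofReal pc) ^ (q/pc) *
            (M ^ (q/pc) * (ENNReal.ofReal p * (M ^ (q/p) * X ^ (q/p)))) := by
          exact mul_le_mul_right (mul_le_mul_right hsum3 _) _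
      _ = ((ENNReal.ofReal pc) ^ (q/pc) * ENNReal.ofReal p) *
            ((M ^ (q/pc) * M ^ (q/p)) * X ^ (q/p)) := by ring
      _ = ((ENNReal.ofReal pc) ^ (q/pc) * ENNReal.ofReal p) * (M ^ q * X ^ (q/p)) := by
          rw [← ENNReal.rpow_add _ _ hM0 hMt, show q/pc + q/p = q by
            have : q/pc + q/p = q * (1/p + 1/pc) := by ring
            rw [this, hconj, mul_one]]
  calc (∑' n, ((w n : ℝ≥0∞) * ∑ k ∈ Finset.range (n+1), (u k : ℝ≥0∞) * g k) ^ q) ^ (1/q)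
      ≤ (((ENNReal.ofReal pc) ^ (q/pc) * ENNReal.ofReal p) * (M ^ q * X ^ (q/p))) ^ (1/q) :=
        ENNReal.rpow_le_rpow final (by positivity)
    _ = (ENNReal.ofReal pc) ^ (1/pc) * (ENNReal.ofReal p) ^ (1/q) * M * X ^ (1/p) := by
        rw [ENNReal.mul_rpow_of_nonneg _ _ (by positivity : (0:ℝ) ≤ 1/q),
          ENNReal.mul_rpow_of_nonneg _ _ (by positivity : (0:ℝ) ≤ 1/q),
          ENNReal.mul_rpow_of_nonneg _ _ (by positivity : (0:ℝ) ≤ 1/q),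
          ← ENNReal.rpow_mul, ← ENNReal.rpow_mul, ← ENNReal.rpow_mul,
          show (q/pc) * (1/q) = 1/pc by field_simp,
          show q * (1/q) = 1 by field_simp,
          show (q/p) * (1/q) = 1/p by field_simp,
          ENNReal.rpow_one]
        ring

/-- The operator norm of the weighted discrete Hardy operator
`f ↦ (ŵ_n ∑_{k ≤ n} û_k f_k)_n` from `l_p` to `l_q`: the least constant `C` in
`(∑_n |ŵ_n ∑_{k=0}^n û_k f_k|^q)^{1/q} ≤ C (∑_n |f_n|^p)^{1/p}`. -/
noncomputable def hardyNorm (u w : ℕ → ℝ≥0) (p q : ℝ) : ℝ≥0∞ :=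
  sInf {C : ℝ≥0∞ | ∀ f : ℕ → ℝ,
    (∑' n : ℕ, ((w n : ℝ≥0∞) *
      (‖∑ k ∈ Finset.range (n + 1), (u k : ℝ) * f k‖₊ : ℝ≥0∞)) ^ q) ^ (1 / q)
    ≤ C * (∑' n : ℕ, (‖f n‖₊ : ℝ≥0∞) ^ p) ^ (1 / p)}

/-- Bennett's constant `M = sup_m (∑_{n ≥ m} ŵ_n^q)^{1/q} (∑_{n=0}^m û_n^{p'})^{1/p'}`. -/
noncomputable def bennettM (u w : ℕ → ℝ≥0) (p q : ℝ) : ℝ≥0∞ :=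
  ⨆ m : ℕ, (∑' n : ℕ, if m ≤ n then (w n : ℝ≥0∞) ^ q else 0) ^ (1 / q) *
    (∑ n ∈ Finset.range (m + 1), (u n : ℝ≥0∞) ^ (p / (p - 1))) ^ ((p - 1) / p)

lemma hardy_nnnorm_coe (r : ℝ≥0) : ‖(r : ℝ)‖₊ = r := by
  ext
  rw [coe_nnnorm, Real.norm_eq_abs, abs_of_nonneg r.coe_nonneg]

lemma bennettM_eq {p q pc : ℝ} (hpc : pc = p / (p - 1)) (u w : ℕ → ℝ≥0) :
    bennettM u w p q = ⨆ m, hW w q m ^ (1/q) * hV u pc (m+1) ^ (1/pc) := by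
  subst hpc
  unfold bennettM hW hV
  rw [one_div_div]

lemma hardy_coe_mul_rpow {pc : ℝ} (hpc1 : 1 < pc) (x : ℝ≥0) :
    (x : ℝ≥0∞) * (x : ℝ≥0∞) ^ (pc - 1) = (x : ℝ≥0∞) ^ pc := by
  rcases eq_or_ne x 0 with rfl | h0
  · rw [ENNReal.coe_zero, zero_mul, ENNReal.zero_rpow_of_pos (by linarith)]
  · have hne : (x : ℝ≥0∞) ≠ 0 := by exact_mod_cast h0
    calc (x : ℝ≥0∞) * (x : ℝ≥0∞) ^ (pc - 1)
        = (x : ℝ≥0∞) ^ (1:ℝ) * (x : ℝ≥0∞) ^ (pc - 1) := by rw [ENNReal.rpow_one]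
      _ = (x : ℝ≥0∞) ^ (1 + (pc - 1)) := (ENNReal.rpow_add _ _ hne ENNReal.coe_ne_top).symm
      _ = (x : ℝ≥0∞) ^ pc := by ring_nf
lemma hardy_lower {p q pc : ℝ} (hp : 1 < p) (hpq : p ≤ q) (hpc : pc = p / (p - 1))
    (u w : ℕ → ℝ≥0) (hfin : bennettM u w p q < ⊤) {Cs : ℝ≥0∞}
    (hCs : ∀ f : ℕ → ℝ,
      (∑' n : ℕ, ((w n : ℝ≥0∞) *
        (‖∑ k ∈ Finset.range (n + 1), (u k : ℝ) * f k‖₊ : ℝ≥0∞)) ^ q) ^ (1 / q)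
      ≤ Cs * (∑' n : ℕ, (‖f n‖₊ : ℝ≥0∞) ^ p) ^ (1 / p)) (m : ℕ) :
    hW w q m ^ (1/q) * hV u pc (m+1) ^ (1/pc) ≤ Cs := by
  have hp0 : (0:ℝ) < p := by linarith
  have hq0 : (0:ℝ) < q := by linarith
  have hpc1 : 1 < pc := hardy_pc_pos hp hpc
  have hpc0 : (0:ℝ) < pc := by linarith
  have hp1 : p - 1 ≠ 0 := by intro h; rw [sub_eq_zero] at h; simp [h.symm] at hp
  set Vm : ℝ≥0∞ := hV u pc (m+1) with hVm
  set f : ℕ → ℝ := fun k => if k ≤ m then ((u k ^ (pc - 1) : ℝ≥0) : ℝ) else 0 with hf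
  -- the ℓ^p norm of the test function
  have hnorm : ∀ n, (‖f n‖₊ : ℝ≥0∞) ^ p = if n ≤ m then (u n : ℝ≥0∞) ^ pc else 0 := by
    intro n
    by_cases h : n ≤ m
    · rw [hf]
      simp only [if_pos h]
      rw [hardy_nnnorm_coe, ENNReal.coe_rpow_of_nonneg _ (by linarith : (0:ℝ) ≤ pc - 1),
        ← ENNReal.rpow_mul, show (pc - 1) * p = pc by rw [hpc]; field_simp; try ring]
    · rw [hf]
      simp only [if_neg h]
      simp [ENNReal.zero_rpow_of_pos hp0]
  have hXf : ∑' n, (‖f n‖₊ : ℝ≥0∞) ^ p = Vm := by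
    rw [tsum_congr hnorm, tsum_eq_sum (s := Finset.range (m+1))
      (fun n hn => if_neg (fun h => hn (Finset.mem_range_succ_iff.mpr h)))]
    rw [hVm]
    unfold hV
    exact Finset.sum_congr rfl fun n hn => if_pos (Finset.mem_range_succ_iff.mp hn)
  -- the inner sums for n ≥ m
  have hinner : ∀ n, m ≤ n →
      (‖∑ k ∈ Finset.range (n+1), (u k : ℝ) * f k‖₊ : ℝ≥0∞) = Vm := by
    intro n hn
    set F : ℕ → ℝ≥0 := fun k => if k ≤ m then u k * u k ^ (pc - 1) else 0 with hF
    have hreal : ∑ k ∈ Finset.range (n+1), (u k : ℝ) * f k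
        = ((∑ k ∈ Finset.range (n+1), F k : ℝ≥0) : ℝ) := by
      rw [NNReal.coe_sum]
      refine Finset.sum_congr rfl fun k _ => ?_
      rw [hf, hF]
      by_cases h : k ≤ m
      · simp only [if_pos h]
        push_cast
        ring
      · simp only [if_neg h]
        simp
    rw [hreal, hardy_nnnorm_coe]
    have hcoe : ((∑ k ∈ Finset.range (n+1), F k : ℝ≥0) : ℝ≥0∞)
        = ∑ k ∈ Finset.range (n+1), (if k ≤ m then (u k : ℝ≥0∞) ^ pc else 0) := by
      rw [ENNReal.coe_finset_sum]
      refine Finset.sum_congr rfl fun k _ => ?_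
      rw [hF]
      by_cases h : k ≤ m
      · simp only [if_pos h]
        rw [ENNReal.coe_mul, ENNReal.coe_rpow_of_nonneg _ (by linarith : (0:ℝ) ≤ pc - 1),
          hardy_coe_mul_rpow hpc1]
      · simp only [if_neg h]
        simp
    have hfilter : ∑ k ∈ Finset.range (n+1), (if k ≤ m then (u k : ℝ≥0∞) ^ pc else 0)
        = ∑ k ∈ Finset.range (m+1), (u k : ℝ≥0∞) ^ pc := by
      rw [← Finset.sum_filter]
      congr 1
      ext k
      simp only [Finset.mem_filter, Finset.mem_range]
      omega
    rw [hcoe, hfilter, hVm]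
    rfl
  -- lower bound for the left-hand side
  have hL : hW w q m * Vm ^ q
      ≤ ∑' n, ((w n : ℝ≥0∞) *
          (‖∑ k ∈ Finset.range (n + 1), (u k : ℝ) * f k‖₊ : ℝ≥0∞)) ^ q := by
    have e : hW w q m * Vm ^ q = ∑' n, (if m ≤ n then (w n : ℝ≥0∞) ^ q else 0) * Vm ^ q := by
      rw [ENNReal.tsum_mul_right]
      rfl
    rw [e]
    refine ENNReal.tsum_le_tsum fun n => ?_
    by_cases h : m ≤ n
    · rw [if_pos h, hinner n h, ← ENNReal.mul_rpow_of_nonneg _ _ hq0.le]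
    · rw [if_neg h, zero_mul]
      exact zero_le
  -- conclude
  have hkey : hW w q m ^ (1/q) * Vm ≤ Cs * Vm ^ (1/p) := by
    have h1 : (hW w q m * Vm ^ q) ^ (1/q) = hW w q m ^ (1/q) * Vm := by
      rw [ENNReal.mul_rpow_of_nonneg _ _ (by positivity), ← ENNReal.rpow_mul,
        show q * (1/q) = 1 by field_simp, ENNReal.rpow_one]
    calc hW w q m ^ (1/q) * Vm = (hW w q m * Vm ^ q) ^ (1/q) := h1.symm
      _ ≤ (∑' n, ((w n : ℝ≥0∞) *
            (‖∑ k ∈ Finset.range (n + 1), (u k : ℝ) * f k‖₊ : ℝ≥0∞)) ^ q) ^ (1/q) :=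
          ENNReal.rpow_le_rpow hL (by positivity)
      _ ≤ Cs * (∑' n, (‖f n‖₊ : ℝ≥0∞) ^ p) ^ (1/p) := hCs f
      _ = Cs * Vm ^ (1/p) := by rw [hXf]
  rcases eq_or_ne Vm 0 with hV0 | hV0
  · rw [hV0, ENNReal.zero_rpow_of_pos (by positivity), mul_zero]
    exact zero_le
  rcases eq_or_ne Vm ⊤ with hVt | hVt
  · rcases eq_or_ne (hW w q m) 0 with hW0 | hW0
    · rw [hW0, ENNReal.zero_rpow_of_pos (by positivity), zero_mul]
      exact zero_le
    · exfalso
      have hterm : hW w q m ^ (1/q) * hV u pc (m+1) ^ (1/pc) ≤ bennettM u w p q := by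
        rw [bennettM_eq hpc u w]
        exact le_iSup (fun m => hW w q m ^ (1/q) * hV u pc (m+1) ^ (1/pc)) m
      rw [← hVm, hVt, ENNReal.top_rpow_of_pos (by positivity),
        ENNReal.mul_top (hardy_rpow_ne_zero hW0 (by positivity))] at hterm
      exact hfin.ne (top_le_iff.mp hterm)
  · have hsplit : Vm = Vm ^ (1/pc) * Vm ^ (1/p) := by
      rw [← ENNReal.rpow_add _ _ hV0 hVt, show 1/pc + 1/p = 1 by
        rw [hpc, one_div_div]; field_simp; ring, ENNReal.rpow_one]
    have h2 : (hW w q m ^ (1/q) * Vm ^ (1/pc)) * Vm ^ (1/p) ≤ Cs * Vm ^ (1/p) := by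
      calc (hW w q m ^ (1/q) * Vm ^ (1/pc)) * Vm ^ (1/p)
          = hW w q m ^ (1/q) * Vm := by rw [mul_assoc, ← hsplit]
        _ ≤ Cs * Vm ^ (1/p) := hkey
    have hne0 : Vm ^ (1/p) ≠ 0 := hardy_rpow_ne_zero hV0 (by positivity)
    have hnet : Vm ^ (1/p) ≠ ⊤ := ENNReal.rpow_ne_top_of_nonneg (by positivity) hVt
    exact (ENNReal.mul_le_mul_iff_left hne0 hnet).mp h2

/-- (Bennett) For `1 < p ≤ q < ∞` and nonnegative sequences `û, ŵ` with `M < ∞`,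
the operator norm of the discrete Hardy operator `l_p → l_q` is comparable to `M`,
with constants depending only on `p, q`. -/
theorem stmt5 (p q : ℝ) (hp : 1 < p) (hpq : p ≤ q) :
    ∃ c C : ℝ≥0∞, 0 < c ∧ C < ⊤ ∧
      ∀ u w : ℕ → ℝ≥0, bennettM u w p q < ⊤ →
        c * bennettM u w p q ≤ hardyNorm u w p q ∧
        hardyNorm u w p q ≤ C * bennettM u w p q := by
  have hp0 : (0:ℝ) < p := by linarith
  have hq0 : (0:ℝ) < q := by linarith
  set pc : ℝ := p / (p - 1) with hpc
  have hpc1 : 1 < pc := hardy_pc_pos hp hpc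
  have hpc0 : (0:ℝ) < pc := by linarith
  refine ⟨1, (ENNReal.ofReal pc) ^ (1/pc) * (ENNReal.ofReal p) ^ (1/q), zero_lt_one, ?_, ?_⟩
  · rw [lt_top_iff_ne_top]
    exact ENNReal.mul_ne_top
      (ENNReal.rpow_ne_top_of_nonneg (by positivity) ENNReal.ofReal_ne_top)
      (ENNReal.rpow_ne_top_of_nonneg (by positivity) ENNReal.ofReal_ne_top)
  intro u w hMfin
  constructor
  · -- lower bound
    rw [one_mul]
    unfold hardyNorm
    refine le_sInf fun Cs hCs => ?_
    simp only [Set.mem_setOf_eq] at hCs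
    rw [bennettM_eq hpc u w]
    exact iSup_le fun m => hardy_lower hp hpq hpc u w hMfin hCs m
  · -- upper bound
    have hM : ∀ m, hW w q m ^ (1/q) * hV u pc (m+1) ^ (1/pc) ≤ bennettM u w p q := by
      intro m
      rw [bennettM_eq hpc u w]
      exact le_iSup (fun m => hW w q m ^ (1/q) * hV u pc (m+1) ^ (1/pc)) m
    rcases eq_or_ne (bennettM u w p q) 0 with hM0 | hM0
    · rw [hM0, mul_zero]
      unfold hardyNorm
      refine sInf_le fun f => ?_
      have hzero : ∀ n, ((w n : ℝ≥0∞) *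
          (‖∑ k ∈ Finset.range (n + 1), (u k : ℝ) * f k‖₊ : ℝ≥0∞)) ^ q = 0 := by
        intro n
        by_cases hw : w n = 0
        · rw [hw, ENNReal.coe_zero, zero_mul, ENNReal.zero_rpow_of_pos hq0]
        · have hterm := (hM n).trans_eq hM0
          have hWn : hW w q n ^ (1/q) ≠ 0 :=
            hardy_rpow_ne_zero (hardy_Wpos hq0 w le_rfl hw) (by positivity)
          rcases mul_eq_zero.mp (le_zero_iff.mp hterm) with h | h
          · exact absurd h hWn
          · have hVz : hV u pc (n+1) = 0 := by
              rcases ENNReal.rpow_eq_zero_iff.mp h with ⟨h0, _⟩ | ⟨_, hlt⟩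
              · exact h0
              · exfalso
                have : (0:ℝ) < 1/pc := by positivity
                linarith
            have hu : ∀ k ∈ Finset.range (n+1), (u k : ℝ) = 0 := by
              intro k hk
              have h1 : (u k : ℝ≥0∞) ^ pc = 0 := by
                have := (Finset.sum_eq_zero_iff.mp hVz) k hk
                exact this
              rcases ENNReal.rpow_eq_zero_iff.mp h1 with ⟨h0, _⟩ | ⟨ht, _⟩
              · have : u k = 0 := by exact_mod_cast h0
                simp [this]
              · exact absurd ht ENNReal.coe_ne_top
            have hsum0 : ∑ k ∈ Finset.range (n+1), (u k : ℝ) * f k = 0 :=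
              Finset.sum_eq_zero fun k hk => by rw [hu k hk, zero_mul]
            rw [hsum0, nnnorm_zero, ENNReal.coe_zero, mul_zero,
              ENNReal.zero_rpow_of_pos hq0]
      have hLHS : (∑' n : ℕ, ((w n : ℝ≥0∞) *
          (‖∑ k ∈ Finset.range (n + 1), (u k : ℝ) * f k‖₊ : ℝ≥0∞)) ^ q) ^ (1/q) = 0 := by
        rw [tsum_congr hzero, tsum_zero, ENNReal.zero_rpow_of_pos (by positivity)]
      rw [hLHS, zero_mul]
    · have hMt : bennettM u w p q ≠ ⊤ := hMfin.ne
      unfold hardyNorm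
      refine sInf_le fun f => ?_
      set g : ℕ → ℝ≥0∞ := fun k => (‖f k‖₊ : ℝ≥0∞) with hg
      have hcore := hardy_core hp hpq hpc u w hM0 hMt hM g
      have hbridge : ∀ n, ((w n : ℝ≥0∞) *
          (‖∑ k ∈ Finset.range (n + 1), (u k : ℝ) * f k‖₊ : ℝ≥0∞)) ^ q
          ≤ ((w n : ℝ≥0∞) * ∑ k ∈ Finset.range (n+1), (u k : ℝ≥0∞) * g k) ^ q := by
        intro n
        refine ENNReal.rpow_le_rpow (mul_le_mul_right ?_ _) hq0.le
        calc (‖∑ k ∈ Finset.range (n+1), (u k : ℝ) * f k‖₊ : ℝ≥0∞)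
            ≤ ((∑ k ∈ Finset.range (n+1), ‖(u k : ℝ) * f k‖₊ : ℝ≥0) : ℝ≥0∞) := by
              exact_mod_cast nnnorm_sum_le (Finset.range (n+1)) (fun k => (u k : ℝ) * f k)
          _ = ∑ k ∈ Finset.range (n+1), (u k : ℝ≥0∞) * g k := by
              rw [ENNReal.coe_finset_sum]
              refine Finset.sum_congr rfl fun k _ => ?_
              rw [nnnorm_mul, hardy_nnnorm_coe, ENNReal.coe_mul]
      calc (∑' n : ℕ, ((w n : ℝ≥0∞) *
            (‖∑ k ∈ Finset.range (n + 1), (u k : ℝ) * f k‖₊ : ℝ≥0∞)) ^ q) ^ (1/q)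
          ≤ (∑' n : ℕ, ((w n : ℝ≥0∞) *
              ∑ k ∈ Finset.range (n+1), (u k : ℝ≥0∞) * g k) ^ q) ^ (1/q) :=
            ENNReal.rpow_le_rpow (ENNReal.tsum_le_tsum hbridge) (by positivity)
        _ ≤ (ENNReal.ofReal pc) ^ (1/pc) * (ENNReal.ofReal p) ^ (1/q) * bennettM u w p q *
              (∑' k, g k ^ p) ^ (1/p) := hcore
        _ = (ENNReal.ofReal pc) ^ (1/pc) * (ENNReal.ofReal p) ^ (1/q) * bennettM u w p q *
              (∑' n : ℕ, (‖f n‖₊ : ℝ≥0∞) ^ p) ^ (1/p) := rfl
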